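/- Let ψ : A → A be a bijective linear map which satisfies h∘ψ = h, commutes with the antipode (ψ∘S = S∘ψ), and is multiplicative for the convolution product (ψ(a⋆b) = ψ(a)⋆ψ(b) for all a,b ∈ A). Then ψ preserves the comultiplication: Δ∘ψ = (ψ⊗ψ)∘Δ, i.e. (ψ⁻¹⊗ψ⁻¹)∘Δ∘ψ = Δ. -/

import Mathlib

open TensorProduct

noncomputable section

namespace QAG

variable {A : Type*} [Ring A] [HopfAlgebra ℂ A] [StarRing A] [StarModule ℂ A]
  [FiniteDimensional ℂ A]

/-- `(h ⊗ id)` as a map `A ⊗ A → A`. -/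
def hTensorId (h : A →ₗ[ℂ] ℂ) : A ⊗[ℂ] A →ₗ[ℂ] A :=
  (TensorProduct.lid ℂ A).toLinearMap ∘ₗ TensorProduct.map h LinearMap.id

/-- `(id ⊗ h)` as a map `A ⊗ A → A`. -/
def idTensorH (h : A →ₗ[ℂ] ℂ) : A ⊗[ℂ] A →ₗ[ℂ] A :=
  (TensorProduct.rid ℂ A).toLinearMap ∘ₗ TensorProduct.map LinearMap.id h

/-- The convolution product `a ⋆ b = (h ⊗ id)(((S ⊗ id)Δ(b))·(a ⊗ 1))`. -/
def conv (h : A →ₗ[ℂ] ℂ) (a b : A) : A :=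
  hTensorId h
    ((TensorProduct.map (HopfAlgebra.antipode (R := ℂ)) LinearMap.id
        (Coalgebra.comul (R := ℂ) b)) * (a ⊗ₜ[ℂ] (1 : A)))

/-- The Fourier transform `F(a) = h(·a)` as an element of the dual space. -/
def fourier (h : A →ₗ[ℂ] ℂ) (a : A) : Module.Dual ℂ A :=
  h ∘ₗ LinearMap.mulRight ℂ a

/-- The product of the dual algebra `A*`: `(ω₁·ω₂)(c) = (ω₁ ⊗ ω₂)(Δ(c))`. -/
def dualMul (φ ψ : Module.Dual ℂ A) : Module.Dual ℂ A :=
  (TensorProduct.lid ℂ ℂ).toLinearMap ∘ₗ TensorProduct.map φ ψ ∘ₗ Coalgebra.comul (R := ℂ)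


abbrev Sa : A →ₗ[ℂ] A := HopfAlgebra.antipode (R := ℂ)
lemma hTensorId_tmul (h : A →ₗ[ℂ] ℂ) (x y : A) : hTensorId h (x ⊗ₜ[ℂ] y) = h x • y := by
  simp [hTensorId]
lemma idTensorH_tmul (h : A →ₗ[ℂ] ℂ) (x y : A) : idTensorH h (x ⊗ₜ[ℂ] y) = h y • x := by
  simp [idTensorH]
lemma fourier_apply (h : A →ₗ[ℂ] ℂ) (a x : A) : fourier h a x = h (x * a) := rfl

def fourierL (h : A →ₗ[ℂ] ℂ) : A →ₗ[ℂ] Module.Dual ℂ A where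
  toFun := fourier h
  map_add' a b := by ext x; simp [fourier_apply, mul_add]
  map_smul' c a := by ext x; simp [fourier_apply, mul_smul_comm]
@[simp] lemma fourierL_apply (h : A →ₗ[ℂ] ℂ) (a : A) : fourierL h a = fourier h a := rfl

lemma conv_repr (h : A →ₗ[ℂ] ℂ) (u v : A) (rv : Coalgebra.Repr ℂ v (A × A)) :
    conv h u v = ∑ i ∈ rv.index, h (Sa (rv.left i) * u) • rv.right i := by
  rw [conv, ← rv.eq]
  simp [map_sum, Finset.sum_mul, Algebra.TensorProduct.tmul_mul_tmul, hTensorId_tmul]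
lemma dualMul_repr (φ ω : Module.Dual ℂ A) (c : A) (rc : Coalgebra.Repr ℂ c (A × A)) :
    dualMul φ ω c = ∑ i ∈ rc.index, φ (rc.left i) * ω (rc.right i) := by
  rw [dualMul]
  simp only [LinearMap.coe_comp, Function.comp_apply, LinearEquiv.coe_coe]
  rw [← rc.eq]
  simp [map_sum, smul_eq_mul]

-- chunk 3
lemma h_sum_smul_mul (h : A →ₗ[ℂ] ℂ) {ι : Type*} (s : Finset ι) (c : ι → ℂ) (w : ι → A)
    (u : A) : h ((∑ i ∈ s, c i • w i) * u) = ∑ i ∈ s, c i * h (w i * u) := by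
  rw [Finset.sum_mul]
  simp [smul_mul_assoc, smul_eq_mul]

lemma sum_counit_smul (b : A) (rb : Coalgebra.Repr ℂ b (A × A)) :
    ∑ i ∈ rb.index, Coalgebra.counit (R := ℂ) (rb.right i) • rb.left i = b := by
  have h3 := congrArg (TensorProduct.rid ℂ A) (Coalgebra.sum_tmul_counit_eq (R := ℂ) rb)
  rw [map_sum] at h3
  simpa using h3

/-- Convolution by `a` on the left, as a linear map. -/
def convL (h : A →ₗ[ℂ] ℂ) (a : A) : A →ₗ[ℂ] A :=
  hTensorId h ∘ₗ LinearMap.mulRight ℂ (a ⊗ₜ[ℂ] (1 : A)) ∘ₗ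
    TensorProduct.map (HopfAlgebra.antipode (R := ℂ)) LinearMap.id ∘ₗ Coalgebra.comul (R := ℂ)

lemma convL_apply' (h : A →ₗ[ℂ] ℂ) (a x : A) : convL h a x = conv h a x := rfl

/-- The helper functional `x ⊗ (y ⊗ z) ↦ h(y a) h(S(x) z)`. -/
def phi (h : A →ₗ[ℂ] ℂ) (a : A) : A ⊗[ℂ] (A ⊗[ℂ] A) →ₗ[ℂ] ℂ :=
  (TensorProduct.lid ℂ ℂ).toLinearMap ∘ₗ
    TensorProduct.map (fourier h a)
      (h ∘ₗ LinearMap.mul' ℂ A ∘ₗ (LinearMap.rTensor A (Sa (A := A)))) ∘ₗ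
    (TensorProduct.assoc ℂ A A A).toLinearMap ∘ₗ
    (LinearMap.rTensor A (TensorProduct.comm ℂ A A).toLinearMap) ∘ₗ
    (TensorProduct.assoc ℂ A A A).symm.toLinearMap

lemma phi_tmul (h : A →ₗ[ℂ] ℂ) (a x y z : A) :
    phi h a (x ⊗ₜ[ℂ] (y ⊗ₜ[ℂ] z)) = h (y * a) * h (Sa x * z) := by
  simp [phi, fourier_apply, LinearMap.mul'_apply, smul_eq_mul]



section Faithful
variable (h : A →ₗ[ℂ] ℂ)
  (hfaithful : ∀ a : A, h (star a * a) = 0 → a = 0)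
  (htracial : ∀ a b : A, h (a * b) = h (b * a))

include hfaithful htracial in
lemma nondeg {x : A} (hx : ∀ y : A, h (y * x) = 0) : x = 0 :=
  hfaithful x (hx (star x))

include hfaithful htracial in
lemma fourierL_bij : Function.Bijective (fourierL (A := A) h) := by
  have hinj : Function.Injective (fourierL (A := A) h) := by
    rw [← LinearMap.ker_eq_bot, LinearMap.ker_eq_bot']
    intro x hx
    refine nondeg h hfaithful htracial (fun y => ?_)
    have := congrFun (congrArg (fun f : Module.Dual ℂ A => (f : A → ℂ)) hx) y
    simpa [fourier_apply] using this
  exact ⟨hinj, (LinearMap.injective_iff_surjective_of_finrank_eq_finrank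
    (Subspace.dual_finrank_eq).symm).mp hinj⟩

include hfaithful htracial in
lemma exists_e : ∃ e : A, ∀ x : A, h (x * e) = Coalgebra.counit (R := ℂ) x := by
  obtain ⟨e, he⟩ := (fourierL_bij h hfaithful htracial).2 (Coalgebra.counit (R := ℂ) (A := A))
  exact ⟨e, fun x => by
    have := congrFun (congrArg (fun f : Module.Dual ℂ A => (f : A → ℂ)) he) x
    simpa [fourier_apply] using this⟩

include hfaithful htracial in
lemma tensor_sep {t t' : A ⊗[ℂ] A}
    (H : ∀ u v : A,
      (TensorProduct.lid ℂ ℂ) (TensorProduct.map (fourier h u) (fourier h v) t)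
        = (TensorProduct.lid ℂ ℂ) (TensorProduct.map (fourier h u) (fourier h v) t')) :
    t = t' := by
  classical
  let b := Module.finBasis ℂ A
  have coordEq : ∀ (i j : Fin (Module.finrank ℂ A)) (s : A ⊗[ℂ] A),
      ((b.tensorProduct b).repr s) (i, j)
        = (TensorProduct.lid ℂ ℂ) (TensorProduct.map (b.coord i) (b.coord j) s) := by
    intro i j s
    induction s using TensorProduct.induction_on with
    | zero => simp
    | tmul m n =>
        simp [Module.Basis.tensorProduct_repr_tmul_apply, Module.Basis.coord_apply, mul_comm, smul_eq_mul]
    | add s1 s2 ih1 ih2 => simp [map_add, ih1, ih2]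
  refine Module.Basis.ext_elem (b.tensorProduct b) (fun ij => ?_)
  obtain ⟨i, j⟩ := ij
  obtain ⟨u, hu⟩ := (fourierL_bij h hfaithful htracial).2 (b.coord i)
  obtain ⟨v, hv⟩ := (fourierL_bij h hfaithful htracial).2 (b.coord j)
  rw [coordEq i j t, coordEq i j t', ← hu, ← hv]
  exact H u v

end Faithful

section Main
variable (h : A →ₗ[ℂ] ℂ)
  (hSS : ∀ a : A, HopfAlgebra.antipode (R := ℂ) (HopfAlgebra.antipode (R := ℂ) a) = a)
  (htracial : ∀ a b : A, h (a * b) = h (b * a))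
  (hstrong : ∀ b c : A,
      HopfAlgebra.antipode (R := ℂ)
          (idTensorH h ((Coalgebra.comul (R := ℂ) b) * ((1 : A) ⊗ₜ[ℂ] c)))
        = idTensorH h (((1 : A) ⊗ₜ[ℂ] b) * Coalgebra.comul (R := ℂ) c))

include htracial in
lemma idTensorH_one_mul (v c : A) (rc : Coalgebra.Repr ℂ c (A × A)) :
    idTensorH h (((1 : A) ⊗ₜ[ℂ] v) * Coalgebra.comul (R := ℂ) c)
      = ∑ m ∈ rc.index, h (v * rc.right m) • rc.left m := by
  rw [← rc.eq]
  simp [Finset.mul_sum, Algebra.TensorProduct.tmul_mul_tmul, idTensorH_tmul]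

include htracial in
lemma idTensorH_mul_one (v c : A) (rv : Coalgebra.Repr ℂ v (A × A)) :
    idTensorH h ((Coalgebra.comul (R := ℂ) v) * ((1 : A) ⊗ₜ[ℂ] c))
      = ∑ k ∈ rv.index, h (rv.right k * c) • rv.left k := by
  rw [← rv.eq]
  simp [Finset.sum_mul, Algebra.TensorProduct.tmul_mul_tmul, idTensorH_tmul]

include htracial hstrong in
lemma strong_repr (v c : A) (rv : Coalgebra.Repr ℂ v (A × A)) (rc : Coalgebra.Repr ℂ c (A × A)) :
    ∑ k ∈ rv.index, h (rv.right k * c) • Sa (rv.left k)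
      = ∑ m ∈ rc.index, h (v * rc.right m) • rc.left m := by
  have hs := hstrong v c
  rw [idTensorH_mul_one h htracial v c rv, idTensorH_one_mul h htracial v c rc] at hs
  rw [← hs]
  simp [map_sum, map_smul]

include htracial hstrong in
lemma fourier_conv (u v c : A) :
    fourier h (conv h u v) c = dualMul (fourier h u) (fourier h v) c := by
  set rv := Coalgebra.Repr.arbitrary ℂ v with hrv
  set rc := Coalgebra.Repr.arbitrary ℂ c with hrc
  calc fourier h (conv h u v) c
      = h (conv h u v * c) := by rw [fourier_apply, htracial]
    _ = ∑ k ∈ rv.index, h (Sa (rv.left k) * u) * h (rv.right k * c) := by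
        rw [conv_repr h u v rv, h_sum_smul_mul]
    _ = ∑ k ∈ rv.index, h (rv.right k * c) * h (Sa (rv.left k) * u) := by
        exact Finset.sum_congr rfl fun k _ => mul_comm _ _
    _ = h ((∑ k ∈ rv.index, h (rv.right k * c) • Sa (rv.left k)) * u) := by
        rw [h_sum_smul_mul]
    _ = h ((∑ m ∈ rc.index, h (v * rc.right m) • rc.left m) * u) := by
        rw [strong_repr h htracial hstrong v c rv rc]
    _ = ∑ m ∈ rc.index, h (v * rc.right m) * h (rc.left m * u) := by
        rw [h_sum_smul_mul]
    _ = ∑ m ∈ rc.index, h (rc.left m * u) * h (rc.right m * v) := by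
        exact Finset.sum_congr rfl fun m _ => by rw [mul_comm, htracial v]
    _ = dualMul (fourier h u) (fourier h v) c := by
        rw [dualMul_repr (fourier h u) (fourier h v) c rc]
        rfl

include hSS in
lemma counit_conv (u b : A) :
    Coalgebra.counit (R := ℂ) (conv h u b) = h (Sa b * u) := by
  set rb := Coalgebra.Repr.arbitrary ℂ b with hrb
  rw [conv_repr h u b rb, map_sum]
  simp only [map_smul, smul_eq_mul]
  have : ∑ k ∈ rb.index, h (Sa (rb.left k) * u) * Coalgebra.counit (R := ℂ) (rb.right k)
      = h ((∑ k ∈ rb.index, Coalgebra.counit (R := ℂ) (rb.right k) • Sa (rb.left k)) * u) := by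
    rw [h_sum_smul_mul]
    exact Finset.sum_congr rfl fun k _ => mul_comm _ _
  rw [this]
  congr 2
  have := congrArg Sa (sum_counit_smul (A := A) b rb)
  rw [map_sum] at this
  simpa only [map_smul] using this



section WithE
variable (e : A) (he : ∀ x : A, h (x * e) = Coalgebra.counit (R := ℂ) x)

include htracial hSS hstrong he in
lemma C_sum (re : Coalgebra.Repr ℂ e (A × A)) (c : A) :
    ∑ i ∈ re.index, h (re.right i * c) • re.left i = Sa c := by
  set rc := Coalgebra.Repr.arbitrary ℂ c with hrc
  have hs := hstrong e c
  rw [idTensorH_mul_one h htracial e c re, idTensorH_one_mul h htracial e c rc] at hs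
  have hrw : ∀ m ∈ rc.index, h (e * rc.right m) • rc.left m
      = Coalgebra.counit (R := ℂ) (rc.right m) • rc.left m := fun m _ => by
    rw [htracial, he]
  rw [Finset.sum_congr rfl hrw, sum_counit_smul] at hs
  calc ∑ i ∈ re.index, h (re.right i * c) • re.left i
      = Sa (Sa (∑ i ∈ re.index, h (re.right i * c) • re.left i)) := (hSS _).symm
    _ = Sa c := by rw [hs]

include htracial hSS hstrong he in
lemma C_sum_S (re : Coalgebra.Repr ℂ e (A × A)) (c : A) :
    ∑ i ∈ re.index, h (re.right i * c) • Sa (re.left i) = c := by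
  have := congrArg Sa (C_sum h hSS htracial hstrong e he re c)
  rw [map_sum] at this
  simp only [map_smul] at this
  rw [this, hSS]

include hSS htracial hstrong he in
lemma trace_convL (a : A) :
    LinearMap.trace ℂ A (convL h a) = Coalgebra.counit (R := ℂ) a * h 1 := by
  classical
  set re := Coalgebra.Repr.arbitrary ℂ e with hre
  set ra := Coalgebra.Repr.arbitrary ℂ a with hra
  let RP : (i : re.ι) → Coalgebra.Repr ℂ (re.left i) (A × A) :=
    fun i => Coalgebra.Repr.arbitrary ℂ (re.left i)
  let RQ : (i : re.ι) → Coalgebra.Repr ℂ (re.right i) (A × A) :=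
    fun i => Coalgebra.Repr.arbitrary ℂ (re.right i)
  -- Step 1 : represent `convL h a` via rank-one maps
  have hrep : convL h a = ∑ i ∈ re.index,
      dualTensorHom ℂ A A ((fourier h (re.right i)) ⊗ₜ[ℂ] (conv h a (Sa (re.left i)))) := by
    ext x
    have hx : ∑ i ∈ re.index, h (x * re.right i) • Sa (re.left i) = x := by
      refine Eq.trans (Finset.sum_congr rfl fun i _ => by rw [htracial]) ?_
      exact C_sum_S h hSS htracial hstrong e he re x
    calc convL h a x = convL h a (∑ i ∈ re.index, h (x * re.right i) • Sa (re.left i)) := by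
          rw [hx]
      _ = ∑ i ∈ re.index, h (x * re.right i) • conv h a (Sa (re.left i)) := by
          rw [map_sum]
          exact Finset.sum_congr rfl fun i _ => by rw [map_smul, convL_apply']
      _ = _ := by
          rw [LinearMap.sum_apply]
          exact Finset.sum_congr rfl fun i _ => by
            rw [dualTensorHom_apply, fourier_apply]
  -- Step 2 : compute the trace
  rw [hrep, map_sum]
  have step2 : ∀ i ∈ re.index,
      LinearMap.trace ℂ A
          (dualTensorHom ℂ A A ((fourier h (re.right i)) ⊗ₜ[ℂ] (conv h a (Sa (re.left i)))))
        = ∑ j ∈ (RQ i).index, h ((RQ i).left j * a) * h (Sa (re.left i) * (RQ i).right j) := by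
    intro i _
    rw [LinearMap.trace_eq_contract_apply, contractLeft_apply, fourier_apply, htracial,
      ← fourier_apply h (conv h a (Sa (re.left i))),
      fourier_conv h htracial hstrong a (Sa (re.left i)) (re.right i),
      dualMul_repr _ _ _ (RQ i)]
    exact Finset.sum_congr rfl fun j _ => by rw [fourier_apply, fourier_apply, htracial _ (Sa (re.left i))]
  rw [Finset.sum_congr rfl step2]
  -- Step 3 : coassociativity swap
  have key := congrArg (phi h a) (Coalgebra.sum_tmul_tmul_eq re RP RQ)
  rw [map_sum, map_sum] at key
  simp only [map_sum, phi_tmul] at key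
  rw [← key]
  -- Step 4 : use strong invariance at `re.left i`
  have step4 : ∀ i ∈ re.index,
      ∑ j ∈ (RP i).index, h ((RP i).right j * a) * h (Sa ((RP i).left j) * re.right i)
        = ∑ k ∈ ra.index, h (re.left i * ra.right k) * h (ra.left k * re.right i) := by
    intro i _
    calc ∑ j ∈ (RP i).index, h ((RP i).right j * a) * h (Sa ((RP i).left j) * re.right i)
        = h ((∑ j ∈ (RP i).index, h ((RP i).right j * a) • Sa ((RP i).left j)) * re.right i) := by
          rw [h_sum_smul_mul]
      _ = h ((∑ k ∈ ra.index, h (re.left i * ra.right k) • ra.left k) * re.right i) := by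
          rw [strong_repr h htracial hstrong (re.left i) a (RP i) ra]
      _ = _ := by rw [h_sum_smul_mul]
  rw [Finset.sum_congr rfl step4, Finset.sum_comm]
  -- Step 5 : collapse the `e`-summation using Lemma C
  have step5 : ∀ k ∈ ra.index,
      ∑ i ∈ re.index, h (re.left i * ra.right k) * h (ra.left k * re.right i)
        = h (Sa (ra.left k) * ra.right k) := by
    intro k _
    calc ∑ i ∈ re.index, h (re.left i * ra.right k) * h (ra.left k * re.right i)
        = ∑ i ∈ re.index, h (re.right i * ra.left k) * h (re.left i * ra.right k) := by
          exact Finset.sum_congr rfl fun i _ => by rw [mul_comm, htracial (ra.left k)]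
      _ = h ((∑ i ∈ re.index, h (re.right i * ra.left k) • re.left i) * ra.right k) := by
          rw [h_sum_smul_mul]
      _ = h (Sa (ra.left k) * ra.right k) := by
          rw [C_sum h hSS htracial hstrong e he re (ra.left k)]
  rw [Finset.sum_congr rfl step5, ← map_sum]
  -- Step 6 : the antipode axiom
  have step6 : ∑ k ∈ ra.index, Sa (ra.left k) * ra.right k
      = algebraMap ℂ A (Coalgebra.counit (R := ℂ) a) := HopfAlgebra.sum_antipode_mul_eq_algebraMap_counit ra
  rw [step6, Algebra.algebraMap_eq_smul_one, map_smul, smul_eq_mul]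

section Psi
variable (ψ : A →ₗ[ℂ] A) (hbij : Function.Bijective ψ)
  (hψS : ∀ a : A, ψ (HopfAlgebra.antipode (R := ℂ) a)
      = HopfAlgebra.antipode (R := ℂ) (ψ a))
  (hψconv : ∀ a b : A, ψ (conv h a b) = conv h (ψ a) (ψ b))

include hSS htracial hstrong he hbij hψconv in
lemma counit_psi (h1 : h (1 : A) ≠ 0) (z : A) :
    Coalgebra.counit (R := ℂ) (ψ z) = Coalgebra.counit (R := ℂ) z := by
  set eψ := LinearEquiv.ofBijective ψ hbij with heψ
  have hconj : convL h (ψ z) = eψ.conj (convL h z) := by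
    ext x
    have hx : ψ (eψ.symm x) = x := eψ.apply_symm_apply x
    rw [LinearEquiv.conj_apply_apply]
    show convL h (ψ z) x = eψ (convL h z (eψ.symm x))
    rw [convL_apply', convL_apply']
    show conv h (ψ z) x = ψ (conv h z (eψ.symm x))
    rw [hψconv, hx]
  have t3 : LinearMap.trace ℂ A (convL h (ψ z)) = LinearMap.trace ℂ A (convL h z) := by
    rw [hconj, LinearMap.trace_conj']
  rw [trace_convL h hSS htracial hstrong e he (ψ z),
    trace_convL h hSS htracial hstrong e he z] at t3
  exact mul_right_cancel₀ h1 t3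

include hSS htracial hstrong he hbij hψS hψconv in
lemma h_psi_mul (h1 : h (1 : A) ≠ 0) (x y : A) : h (ψ x * ψ y) = h (x * y) := by
  calc h (ψ x * ψ y) = h (Sa (ψ (Sa x)) * ψ y) := by rw [← hψS, hSS]
    _ = Coalgebra.counit (R := ℂ) (conv h (ψ y) (ψ (Sa x))) := by
        rw [counit_conv h hSS (ψ y) (ψ (Sa x))]
    _ = Coalgebra.counit (R := ℂ) (ψ (conv h y (Sa x))) := by rw [hψconv]
    _ = Coalgebra.counit (R := ℂ) (conv h y (Sa x)) :=
        counit_psi h hSS htracial hstrong e he ψ hbij hψconv h1 _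
    _ = h (Sa (Sa x) * y) := counit_conv h hSS y (Sa x)
    _ = h (x * y) := by rw [hSS, htracial]

end Psi

end WithE

end Main

/-- a bijective linear map `ψ : A → A` preserving `h`, commuting
with the antipode and multiplicative for the convolution product preserves the
comultiplication: `Δ ∘ ψ = (ψ ⊗ ψ) ∘ Δ`. -/
theorem convolution_multiplicative_implies_comul_preserving
    (h : A →ₗ[ℂ] ℂ)
    -- the antipode is an involution commuting with the `*`-operation
    (hSS : ∀ a : A, HopfAlgebra.antipode (R := ℂ) (HopfAlgebra.antipode (R := ℂ) a) = a)
    (hSstar : ∀ a : A, HopfAlgebra.antipode (R := ℂ) (star a)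
      = star (HopfAlgebra.antipode (R := ℂ) a))
    -- `h` is faithful, hermitian, tracial, `S`-invariant and (bi-)invariant
    (hfaithful : ∀ a : A, h (star a * a) = 0 → a = 0)
    (hhermitian : ∀ a : A, h (star a) = starRingEnd ℂ (h a))
    (htracial : ∀ a b : A, h (a * b) = h (b * a))
    (hSinv : ∀ a : A, h (HopfAlgebra.antipode (R := ℂ) a) = h a)
    (hinvl : ∀ a : A, hTensorId h (Coalgebra.comul (R := ℂ) a) = h a • (1 : A))
    (hinvr : ∀ a : A, idTensorH h (Coalgebra.comul (R := ℂ) a) = h a • (1 : A))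
    -- strong invariance
    (hstrong : ∀ b c : A,
      HopfAlgebra.antipode (R := ℂ)
          (idTensorH h ((Coalgebra.comul (R := ℂ) b) * ((1 : A) ⊗ₜ[ℂ] c)))
        = idTensorH h (((1 : A) ⊗ₜ[ℂ] b) * Coalgebra.comul (R := ℂ) c))
    (ψ : A →ₗ[ℂ] A) (hbij : Function.Bijective ψ)
    (hψh : ∀ a : A, h (ψ a) = h a)
    (hψS : ∀ a : A, ψ (HopfAlgebra.antipode (R := ℂ) a)
      = HopfAlgebra.antipode (R := ℂ) (ψ a))
    (hψconv : ∀ a b : A, ψ (conv h a b) = conv h (ψ a) (ψ b)) :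
    ∀ a : A,
      Coalgebra.comul (R := ℂ) (ψ a) = TensorProduct.map ψ ψ (Coalgebra.comul (R := ℂ) a) := by
  intro a
  by_cases h1 : h (1 : A) = 0
  · have hone : (1 : A) = 0 := hfaithful 1 (by simpa using h1)
    have hz : ∀ x : A, x = 0 := fun x => by rw [← mul_one x, hone, mul_zero]
    rw [hz a]
    simp
  · obtain ⟨e, he⟩ := exists_e h hfaithful htracial
    have E : ∀ x y : A, h (ψ x * ψ y) = h (x * y) :=
      h_psi_mul h hSS htracial hstrong e he ψ hbij hψS hψconv h1
    apply tensor_sep h hfaithful htracial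
    intro u v
    obtain ⟨p, hp⟩ := hbij.2 u
    obtain ⟨q, hq⟩ := hbij.2 v
    subst hp hq
    have hcomp1 : (fourier h (ψ p)) ∘ₗ ψ = fourier h p := by
      ext x
      simpa [fourier_apply] using E x p
    have hcomp2 : (fourier h (ψ q)) ∘ₗ ψ = fourier h q := by
      ext x
      simpa [fourier_apply] using E x q
    have hRHS : TensorProduct.map (fourier h (ψ p)) (fourier h (ψ q))
        (TensorProduct.map ψ ψ (Coalgebra.comul (R := ℂ) a))
        = TensorProduct.map (fourier h p) (fourier h q) (Coalgebra.comul (R := ℂ) a) := by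
      rw [← LinearMap.comp_apply, ← TensorProduct.map_comp, hcomp1, hcomp2]
    rw [hRHS]
    have hLHS : (TensorProduct.lid ℂ ℂ)
        (TensorProduct.map (fourier h (ψ p)) (fourier h (ψ q))
          (Coalgebra.comul (R := ℂ) (ψ a)))
        = dualMul (fourier h (ψ p)) (fourier h (ψ q)) (ψ a) := rfl
    rw [hLHS]
    have hL2 : dualMul (fourier h (ψ p)) (fourier h (ψ q)) (ψ a)
        = fourier h (conv h (ψ p) (ψ q)) (ψ a) :=
      (fourier_conv h htracial hstrong (ψ p) (ψ q) (ψ a)).symm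
    rw [hL2, fourier_apply, ← hψconv, E a (conv h p q), ← fourier_apply h (conv h p q) a,
      fourier_conv h htracial hstrong p q a]
    rfl
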